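/- There is a universal constant C > 0 such that for every d ≥ 1: ∑_{i=1}^d ‖∂b/∂x_i‖_{L²(ℝ^d)}² ≤ C·d², where ∂b/∂x_i denotes the function equal to −2√C_d·x_i on the open unit ball {‖x‖₂ < 1} and 0 outside it (the weak partial derivative of b). -/

import Mathlib

open MeasureTheory Set

/-- The Euclidean (ℓ₂) norm on `ℝ^d`. -/
noncomputable def e2norm {d : ℕ} (x : Fin d → ℝ) : ℝ := Real.sqrt (∑ i, x i ^ 2)

/-- The bump function `b(x) = √C_d (1 - ‖x‖₂²)` on the unit ball, `0` outside. -/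
noncomputable def bump (d : ℕ) (Cd : ℝ) (x : Fin d → ℝ) : ℝ :=
  if e2norm x < 1 then Real.sqrt Cd * (1 - e2norm x ^ 2) else 0

/-- The weak partial derivative of `b` in direction `i`: equal to `-2√C_d·x_i` on
the open unit ball and `0` outside it. -/
noncomputable def bumpDeriv (d : ℕ) (Cd : ℝ) (i : Fin d) (x : Fin d → ℝ) : ℝ :=
  if e2norm x < 1 then -2 * Real.sqrt Cd * x i else 0


lemma continuous_e2norm {d : ℕ} : Continuous (e2norm (d := d)) :=
  Real.continuous_sqrt.comp (continuous_finset_sum _ fun i _ => (continuous_apply i).pow 2)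

lemma e2norm_sq {d : ℕ} (x : Fin d → ℝ) : e2norm x ^ 2 = ∑ i, x i ^ 2 :=
  Real.sq_sqrt (Finset.sum_nonneg fun i _ => sq_nonneg _)

lemma e2norm_equiv {d : ℕ} (y : EuclideanSpace ℝ (Fin d)) :
    e2norm ((MeasurableEquiv.toLp 2 (Fin d → ℝ)).symm y) = ‖y‖ := by
  rw [EuclideanSpace.norm_eq, e2norm]
  congr 1
  refine Finset.sum_congr rfl fun i _ => ?_
  simp [Real.norm_eq_abs, sq_abs, MeasurableEquiv.coe_toLp_symm]

lemma aux_integrableOn (n : ℕ) :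
    IntegrableOn (fun y : ℝ => if y < 1 then y ^ n else 0) (Set.Ioi 0) := by
  have h : (fun y : ℝ => if y < 1 then y ^ n else 0)
      = Set.indicator (Set.Iio 1) (fun y => y ^ n) := by
    funext y; simp [Set.indicator_apply]
  rw [h, IntegrableOn, integrable_indicator_iff measurableSet_Iio, IntegrableOn,
    Measure.restrict_restrict measurableSet_Iio]
  have : Set.Iio (1:ℝ) ∩ Set.Ioi 0 = Set.Ioo 0 1 := by ext y; simp [and_comm]
  rw [this]
  exact ((intervalIntegral.intervalIntegrable_pow n (a:=0) (b:=1)).1).mono_set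
    Set.Ioo_subset_Ioc_self

lemma aux_integral (n : ℕ) :
    ∫ y in Set.Ioi (0:ℝ), (if y < 1 then y ^ n else 0) = 1/(n+1) := by
  have h : (fun y : ℝ => if y < 1 then y ^ n else 0)
      = Set.indicator (Set.Iio 1) (fun y => y ^ n) := by
    funext y; simp [Set.indicator_apply]
  rw [h, setIntegral_indicator measurableSet_Iio, Set.Ioi_inter_Iio,
    setIntegral_congr_set Ioo_ae_eq_Ioc, ← intervalIntegral.integral_of_le zero_le_one,
    integral_pow]
  simp

/-- Radial reduction: for `H : ℝ → ℝ`, the integral of `H ∘ e2norm` over `ℝ^d`. -/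
lemma integral_e2norm_comp {d : ℕ} (hd : 1 ≤ d) (H : ℝ → ℝ) :
    ∫ x : Fin d → ℝ, H (e2norm x)
      = (d : ℝ) * (volume (Metric.ball (0 : EuclideanSpace ℝ (Fin d)) 1)).toReal
          * ∫ y in Set.Ioi (0:ℝ), y ^ (d - 1) * H y := by
  haveI : Nontrivial (EuclideanSpace ℝ (Fin d)) :=
    nontrivial_of_ne (EuclideanSpace.single ⟨0, hd⟩ 1) 0 (by
      intro h
      have := congrFun (congrArg (fun v : EuclideanSpace ℝ (Fin d) => (v : Fin d → ℝ)) h) ⟨0, hd⟩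
      simpa using this)
  have h1 : ∫ x : Fin d → ℝ, H (e2norm x)
      = ∫ y : EuclideanSpace ℝ (Fin d), H ‖y‖ := by
    rw [← (EuclideanSpace.volume_preserving_symm_measurableEquiv_toLp (Fin d)).integral_comp
      (MeasurableEquiv.toLp 2 (Fin d → ℝ)).symm.measurableEmbedding (fun x => H (e2norm x))]
    exact integral_congr_ae (Filter.Eventually.of_forall fun y => by
      show H (e2norm _) = H ‖y‖
      rw [e2norm_equiv])
  rw [h1, integral_fun_norm_addHaar volume H]
  simp only [finrank_euclideanSpace_fin, nsmul_eq_mul, smul_eq_mul, measureReal_def]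
  ring

set_option maxHeartbeats 2000000 in
/-- The sum of the squared `L²` norms of the partial derivatives of `b` is `O(d²)`
(Claim `smallmoment`). -/
theorem sum_sq_L2_norms_bump_derivs_le :
    ∃ C : ℝ, 0 < C ∧
      ∀ (d : ℕ), 1 ≤ d → ∀ Cd : ℝ, 0 < Cd →
        (∫ x : Fin d → ℝ, bump d Cd x ^ 2) = 1 →
        (∑ i : Fin d, ∫ x : Fin d → ℝ, bumpDeriv d Cd i x ^ 2) ≤ C * (d : ℝ) ^ 2 := by
  refine ⟨3, by norm_num, ?_⟩
  intro d hd Cd hCd hb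
  set E := EuclideanSpace ℝ (Fin d)
  set S : Set (Fin d → ℝ) := {x | e2norm x < 1} with hSdef
  have hS : MeasurableSet S := measurableSet_lt continuous_e2norm.measurable measurable_const
  have hSsub : S ⊆ Metric.ball (0 : Fin d → ℝ) 1 := by
    intro x hx
    have hx' : e2norm x < 1 := hx
    rw [Metric.mem_ball, dist_zero_right, pi_norm_lt_iff one_pos]
    intro i
    have h1 : x i ^ 2 ≤ e2norm x ^ 2 := by
      rw [e2norm_sq]
      exact Finset.single_le_sum (fun j _ => sq_nonneg (x j)) (Finset.mem_univ i)
    have h2 : e2norm x ^ 2 < 1 := by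
      have h0 : 0 ≤ e2norm x := Real.sqrt_nonneg _
      nlinarith
    have h3 : x i ^ 2 < 1 := lt_of_le_of_lt h1 h2
    rw [Real.norm_eq_abs]
    nlinarith [abs_nonneg (x i), sq_abs (x i)]
  have hSfin : volume S < ⊤ :=
    lt_of_le_of_lt (measure_mono hSsub) measure_ball_lt_top
  -- integrability of each squared derivative
  have hInt : ∀ i : Fin d, Integrable (fun x : Fin d → ℝ => bumpDeriv d Cd i x ^ 2) := by
    intro i
    have hmeas : Measurable (fun x : Fin d → ℝ => bumpDeriv d Cd i x ^ 2) := by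
      apply Measurable.pow_const
      exact Measurable.ite hS ((measurable_const.mul (measurable_pi_apply i))) measurable_const
    have hdom : Integrable (S.indicator fun _ : Fin d → ℝ => 4 * Cd) :=
      (integrable_indicator_iff hS).2 (integrableOn_const hSfin.ne)
    refine hdom.mono' hmeas.aestronglyMeasurable ?_
    refine Filter.Eventually.of_forall fun x => ?_
    rw [Set.indicator_apply]
    by_cases hx : x ∈ S
    · have hx' : e2norm x < 1 := hx
      rw [if_pos hx]
      simp only [bumpDeriv, if_pos hx']
      rw [Real.norm_eq_abs, abs_of_nonneg (sq_nonneg _)]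
      have h1 : x i ^ 2 ≤ e2norm x ^ 2 := by
        rw [e2norm_sq]
        exact Finset.single_le_sum (fun j _ => sq_nonneg (x j)) (Finset.mem_univ i)
      have h2 : e2norm x ^ 2 < 1 := by
        have h0 : 0 ≤ e2norm x := Real.sqrt_nonneg _
        nlinarith
      have hs : Real.sqrt Cd ^ 2 = Cd := Real.sq_sqrt hCd.le
      nlinarith [sq_nonneg (x i)]
    · have hx' : ¬ e2norm x < 1 := hx
      rw [if_neg hx]
      simp [bumpDeriv, if_neg hx']
  -- LHS as a radial integral
  have hsum : (∑ i : Fin d, ∫ x : Fin d → ℝ, bumpDeriv d Cd i x ^ 2)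
      = ∫ x : Fin d → ℝ, (fun r => if r < 1 then 4 * Cd * r ^ 2 else 0) (e2norm x) := by
    rw [← integral_finset_sum Finset.univ (fun i _ => hInt i)]
    refine integral_congr_ae (Filter.Eventually.of_forall fun x => ?_)
    by_cases hx : e2norm x < 1
    · simp only [bumpDeriv, if_pos hx]
      have : ∀ i : Fin d, (-2 * Real.sqrt Cd * x i) ^ 2 = 4 * Cd * x i ^ 2 := by
        intro i
        have hs : Real.sqrt Cd ^ 2 = Cd := Real.sq_sqrt hCd.le
        nlinarith
      rw [Finset.sum_congr rfl fun i _ => this i, ← Finset.mul_sum, ← e2norm_sq]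
    · simp [bumpDeriv, if_neg hx]
  -- the normalization as a radial integral
  have hb' : (∫ x : Fin d → ℝ,
      (fun r => if r < 1 then Cd * (1 - r ^ 2) ^ 2 else 0) (e2norm x)) = 1 := by
    have heq : (∫ x : Fin d → ℝ,
        (fun r => if r < 1 then Cd * (1 - r ^ 2) ^ 2 else 0) (e2norm x))
        = ∫ x : Fin d → ℝ, bump d Cd x ^ 2 := by
      refine integral_congr_ae (Filter.Eventually.of_forall fun x => ?_)
      by_cases hx : e2norm x < 1
      · simp only [bump, if_pos hx]
        have hs : Real.sqrt Cd ^ 2 = Cd := Real.sq_sqrt hCd.le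
        nlinarith
      · simp [bump, if_neg hx]
    rw [heq, hb]
  rw [hsum, integral_e2norm_comp hd (fun r => if r < 1 then 4 * Cd * r ^ 2 else 0)]
  rw [integral_e2norm_comp hd (fun r => if r < 1 then Cd * (1 - r ^ 2) ^ 2 else 0)] at hb'
  set V := (volume (Metric.ball (0 : E) 1)).toReal with hV
  have hVpos : 0 < V := by
    rw [hV]
    refine ENNReal.toReal_pos ?_ measure_ball_lt_top.ne
    exact (Metric.measure_ball_pos volume 0 one_pos).ne'
  set D := (d : ℝ) with hD
  have hD1 : 1 ≤ D := by rw [hD]; exact_mod_cast hd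
  have hDpos : 0 < D := lt_of_lt_of_le one_pos hD1
  have hcast : ((d - 1 : ℕ) : ℝ) + 1 = D := by
    rw [Nat.cast_sub hd]; push_cast; ring
  -- compute the two radial integrals
  have hI1 : (∫ y in Set.Ioi (0:ℝ), y ^ (d - 1) * (if y < 1 then 4 * Cd * y ^ 2 else 0))
      = 4 * Cd * (1 / (D + 2)) := by
    have heq : ∀ y : ℝ, y ^ (d - 1) * (if y < 1 then 4 * Cd * y ^ 2 else 0)
        = 4 * Cd * (if y < 1 then y ^ (d + 1) else 0) := by
      intro y
      by_cases hy : y < 1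
      · rw [if_pos hy, if_pos hy, show d + 1 = d - 1 + 2 from by omega, pow_add]
        ring
      · rw [if_neg hy, if_neg hy]; ring
    rw [integral_congr_ae (Filter.Eventually.of_forall fun y => heq y),
      integral_const_mul, aux_integral]
    push_cast; ring
  have hI2 : (∫ y in Set.Ioi (0:ℝ), y ^ (d - 1) * (if y < 1 then Cd * (1 - y ^ 2) ^ 2 else 0))
      = Cd * (1 / D - 2 * (1 / (D + 2)) + 1 / (D + 4)) := by
    have heq : ∀ y : ℝ, y ^ (d - 1) * (if y < 1 then Cd * (1 - y ^ 2) ^ 2 else 0)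
        = Cd * (if y < 1 then y ^ (d - 1) else 0)
          - (2 * Cd) * (if y < 1 then y ^ (d + 1) else 0)
          + Cd * (if y < 1 then y ^ (d + 3) else 0) := by
      intro y
      by_cases hy : y < 1
      · simp only [if_pos hy]
        have e1 : d - 1 + 2 = d + 1 := by omega
        have e2 : d - 1 + 4 = d + 3 := by omega
        have p1 : y ^ (d + 1) = y ^ (d - 1) * y ^ 2 := by rw [← pow_add, e1]
        have p2 : y ^ (d + 3) = y ^ (d - 1) * y ^ 4 := by rw [← pow_add, e2]
        clear e1 e2
        rw [p1, p2]; ring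
      · simp [if_neg hy]
    rw [integral_congr_ae (Filter.Eventually.of_forall fun y => heq y)]
    rw [integral_add, integral_sub, integral_const_mul, integral_const_mul,
      integral_const_mul, aux_integral, aux_integral, aux_integral, hcast]
    · push_cast; ring
    · exact (aux_integrableOn _).const_mul _
    · exact (aux_integrableOn _).const_mul _
    · exact ((aux_integrableOn _).const_mul _).sub ((aux_integrableOn _).const_mul _)
    · exact (aux_integrableOn _).const_mul _
  rw [hI1]
  rw [hI2] at hb'
  -- final arithmetic
  set K := D * V * Cd with hK
  have hKpos : 0 < K := by positivity
  have hKB : K * (1 / D - 2 * (1 / (D + 2)) + 1 / (D + 4)) = 1 := by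
    rw [hK]; nlinarith [hb']
  have hBval : (1 / D - 2 * (1 / (D + 2)) + 1 / (D + 4))
      = 8 / (D * (D + 2) * (D + 4)) := by
    field_simp
    ring
  rw [hBval] at hKB
  have hKval : K = D * (D + 2) * (D + 4) / 8 := by
    have h8 : (0:ℝ) < D * (D + 2) * (D + 4) := by positivity
    field_simp at hKB
    linarith
  have hgoal : D * V * (4 * Cd * (1 / (D + 2))) = 4 * (1 / (D + 2)) * K := by
    rw [hK]; ring
  rw [hgoal, hKval]
  have h2 : 4 * (1 / (D + 2)) * (D * (D + 2) * (D + 4) / 8) = D * (D + 4) / 2 := by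
    field_simp
    ring
  rw [h2]
  nlinarith [sq_nonneg D]
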